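/- The ternary quadratic form G(x,y,z) = x² + 3y² + 3z² is an ADC form: for every integer n, if there exist rational numbers x, y, z with x² + 3y² + 3z² = n, then there exist integers x, y, z with x² + 3y² + 3z² = n. -/
import Mathlib

/-- Rounding: any integer `u` is within `d/2` of a multiple of `d`. -/
private lemma exists_near (D u : ℤ) (hD : 0 < D) :
    ∃ r a : ℤ, u = D * r + a ∧ -D ≤ 2 * a ∧ 2 * a ≤ D := by
  have h1 : 0 ≤ u % D := Int.emod_nonneg u hD.ne'
  have h2 : u % D < D := Int.emod_lt_of_pos u hD
  have h3 : D * (u / D) + u % D = u := Int.mul_ediv_add_emod u D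
  by_cases hc : 2 * (u % D) ≤ D
  · exact ⟨u / D, u % D, by linarith, by linarith, hc⟩
  · refine ⟨u / D + 1, u % D - D, ?_, by linarith, by linarith⟩
    have h4 : D * (u / D + 1) = D * (u / D) + D := by ring
    linarith

/-- Rounding centered at `b/2`. -/
private lemma exists_near_half (D u b : ℤ) (hD : 0 < D) :
    ∃ r a : ℤ, u = D * r + a ∧ -D ≤ 2 * a - b ∧ 2 * a - b ≤ D := by
  obtain ⟨R, A, hA, h1, h2⟩ := exists_near (2 * D) (2 * u - b) (by linarith)
  have hA' : 2 * (u - D * R) - b = A := by linear_combination hA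
  exact ⟨R, u - D * R, by ring, by linarith, by linarith⟩

set_option maxHeartbeats 1000000 in
/-- Davenport–Cassels descent for the Euclidean form `E(u,v,w) = u² - uv + v² + w²`. -/
private lemma descentE (m : ℤ) : ∀ d : ℕ, ∀ u v w : ℤ, 0 < d →
    u ^ 2 - u * v + v ^ 2 + w ^ 2 = m * (d : ℤ) ^ 2 →
    ∃ x y z : ℤ, x ^ 2 - x * y + y ^ 2 + z ^ 2 = m := by
  intro d
  induction d using Nat.strong_induction_on with
  | _ d IH =>
    intro u v w hd h
    have hD : (0 : ℤ) < (d : ℤ) := by exact_mod_cast hd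
    have hDne : ((d : ℤ)) ≠ 0 := hD.ne'
    obtain ⟨s, b, hv, hb1, hb2⟩ := exists_near (d : ℤ) v hD
    obtain ⟨r, a, hu, ha1, ha2⟩ := exists_near_half (d : ℤ) u b hD
    obtain ⟨t, c, hw, hc1, hc2⟩ := exists_near (d : ℤ) w hD
    subst hu hv hw
    by_cases h0 : a ^ 2 - a * b + b ^ 2 + c ^ 2 = 0
    · -- the point is integral after dividing by d
      have hb0 : b = 0 := by nlinarith [sq_nonneg (2 * a - b), sq_nonneg c, sq_nonneg b]
      have ha0 : a = 0 := by nlinarith [sq_nonneg (2 * a - b), sq_nonneg c, sq_nonneg b]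
      have hc0 : c = 0 := by nlinarith [sq_nonneg (2 * a - b), sq_nonneg c, sq_nonneg b]
      subst ha0 hb0 hc0
      refine ⟨r, s, t, ?_⟩
      have h2 : (d : ℤ) ^ 2 * (r ^ 2 - r * s + s ^ 2 + t ^ 2) = (d : ℤ) ^ 2 * m := by
        linear_combination h
      exact mul_left_cancel₀ (pow_ne_zero 2 hDne) h2
    · -- proper descent step
      obtain ⟨e, hedef⟩ : ∃ e : ℤ, e = m * (d : ℤ) - (d : ℤ) * (r ^ 2 - r * s + s ^ 2 + t ^ 2)
          - (2 * a * r - a * s - b * r + 2 * b * s + 2 * c * t) := ⟨_, rfl⟩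
      have he : a ^ 2 - a * b + b ^ 2 + c ^ 2 = (d : ℤ) * e := by
        rw [hedef]; linear_combination h
      have hQpos : 0 < a ^ 2 - a * b + b ^ 2 + c ^ 2 := by
        rcases lt_or_eq_of_le (by nlinarith [sq_nonneg (2 * a - b), sq_nonneg b, sq_nonneg c] :
          (0 : ℤ) ≤ a ^ 2 - a * b + b ^ 2 + c ^ 2) with h' | h'
        · exact h'
        · exact absurd h'.symm h0
      have h5 : (0 : ℤ) < (d : ℤ) * e := he ▸ hQpos
      have hepos : 0 < e := lt_of_mul_lt_mul_left (by simpa using h5) hD.le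
      have hlt : a ^ 2 - a * b + b ^ 2 + c ^ 2 < (d : ℤ) ^ 2 := by
        nlinarith [mul_nonneg (by linarith : (0:ℤ) ≤ (d:ℤ) - (2*a - b)) (by linarith : (0:ℤ) ≤ (d:ℤ) + (2*a - b)),
          mul_nonneg (by linarith : (0:ℤ) ≤ (d:ℤ) - 2*b) (by linarith : (0:ℤ) ≤ (d:ℤ) + 2*b),
          mul_nonneg (by linarith : (0:ℤ) ≤ (d:ℤ) - 2*c) (by linarith : (0:ℤ) ≤ (d:ℤ) + 2*c),
          mul_pos hD hD]
      have hDe : (d : ℤ) * e < (d : ℤ) * (d : ℤ) := by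
        calc (d : ℤ) * e = a ^ 2 - a * b + b ^ 2 + c ^ 2 := he.symm
          _ < (d : ℤ) ^ 2 := hlt
          _ = (d : ℤ) * (d : ℤ) := by ring
      have helt : e < (d : ℤ) := lt_of_mul_lt_mul_left hDe hD.le
      have htn : (e.toNat : ℤ) = e := Int.toNat_of_nonneg hepos.le
      refine IH e.toNat (by omega) (e * r + (r ^ 2 - r * s + s ^ 2 + t ^ 2 - m) * a)
        (e * s + (r ^ 2 - r * s + s ^ 2 + t ^ 2 - m) * b)
        (e * t + (r ^ 2 - r * s + s ^ 2 + t ^ 2 - m) * c) (by omega) ?_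
      rw [htn]
      linear_combination (r ^ 2 - r * s + s ^ 2 + t ^ 2 - m) ^ 2 * he +
        e * (r ^ 2 - r * s + s ^ 2 + t ^ 2 - m) * hedef

private lemma zmod3_aux : ∀ A B C : ZMod 3, A ^ 2 - A * B + B ^ 2 + C ^ 2 = 0 →
    C = 0 ∧ A + B = 0 := by decide

/-- Clearing denominators for the form `E`. -/
private lemma clear_denoms (q1 q2 q3 : ℚ) (M : ℤ)
    (h : q1 ^ 2 - q1 * q2 + q2 ^ 2 + q3 ^ 2 = (M : ℚ)) :
    ∃ (d : ℕ) (A B C : ℤ), 0 < d ∧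
      A ^ 2 - A * B + B ^ 2 + C ^ 2 = M * (d : ℤ) ^ 2 := by
  have hd1 : ((q1.den : ℚ)) ≠ 0 := by exact_mod_cast q1.den_ne_zero
  have hd2 : ((q2.den : ℚ)) ≠ 0 := by exact_mod_cast q2.den_ne_zero
  have hd3 : ((q3.den : ℚ)) ≠ 0 := by exact_mod_cast q3.den_ne_zero
  have e1 : (q1.num : ℚ) = q1 * (q1.den : ℚ) := (div_eq_iff hd1).mp (Rat.num_div_den q1)
  have e2 : (q2.num : ℚ) = q2 * (q2.den : ℚ) := (div_eq_iff hd2).mp (Rat.num_div_den q2)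
  have e3 : (q3.num : ℚ) = q3 * (q3.den : ℚ) := (div_eq_iff hd3).mp (Rat.num_div_den q3)
  refine ⟨q1.den * q2.den * q3.den,
    q1.num * ((q2.den : ℤ) * (q3.den : ℤ)),
    q2.num * ((q1.den : ℤ) * (q3.den : ℤ)),
    q3.num * ((q1.den : ℤ) * (q2.den : ℤ)),
    by positivity, ?_⟩
  have key : ((q1.num * ((q2.den : ℤ) * (q3.den : ℤ))) : ℚ) ^ 2
      - ((q1.num * ((q2.den : ℤ) * (q3.den : ℤ))) : ℚ) * ((q2.num * ((q1.den : ℤ) * (q3.den : ℤ))) : ℚ)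
      + ((q2.num * ((q1.den : ℤ) * (q3.den : ℤ))) : ℚ) ^ 2
      + ((q3.num * ((q1.den : ℤ) * (q2.den : ℤ))) : ℚ) ^ 2
      = (M : ℚ) * ((q1.den * q2.den * q3.den : ℕ) : ℚ) ^ 2 := by
    push_cast
    rw [e1, e2, e3]
    linear_combination ((q1.den : ℚ) * (q2.den : ℚ) * (q3.den : ℚ)) ^ 2 * h
  exact_mod_cast key

/-- The ternary quadratic form `G(x,y,z) = x² + 3y² + 3z²` is an ADC form: any integer
represented by `G` over the rationals is represented by `G` over the integers. -/
theorem G_is_ADC (n : ℤ) (h : ∃ x y z : ℚ, x ^ 2 + 3 * y ^ 2 + 3 * z ^ 2 = (n : ℚ)) :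
    ∃ x y z : ℤ, x ^ 2 + 3 * y ^ 2 + 3 * z ^ 2 = n := by
  obtain ⟨x, y, z, hxyz⟩ := h
  -- rational representation of 3n by E
  have hq : (x + 3 * y) ^ 2 - (x + 3 * y) * (2 * x) + (2 * x) ^ 2 + (3 * z) ^ 2
      = ((3 * n : ℤ) : ℚ) := by
    push_cast
    linear_combination 3 * hxyz
  obtain ⟨d, A, B, C, hd, hABC⟩ := clear_denoms _ _ _ _ hq
  obtain ⟨u, v, w, heq⟩ := descentE (3 * n) d A B C hd hABC
  -- now u² - uv + v² + w² = 3n with u,v,w : ℤ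
  have hc : ((u : ZMod 3)) ^ 2 - (u : ZMod 3) * (v : ZMod 3) + (v : ZMod 3) ^ 2
      + (w : ZMod 3) ^ 2 = 0 := by
    have h31 : (3 : ZMod 3) = 0 := by decide
    have hmap := congrArg (fun x : ℤ => (x : ZMod 3)) heq
    push_cast at hmap
    rw [h31] at hmap
    simpa using hmap
  obtain ⟨hC0, hAB0⟩ := zmod3_aux _ _ _ hc
  have hw3 : (3 : ℤ) ∣ w := (ZMod.intCast_zmod_eq_zero_iff_dvd w 3).mp hC0
  have huv3 : (3 : ℤ) ∣ (u + v) := by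
    apply (ZMod.intCast_zmod_eq_zero_iff_dvd (u + v) 3).mp
    push_cast
    exact hAB0
  obtain ⟨z0, hz0⟩ := hw3
  obtain ⟨g, hg⟩ := huv3
  have hv' : v = 3 * g - u := by omega
  subst hv' hz0
  -- key : u² - 3ug + 3g² + 3z0² = n
  have key : u ^ 2 - 3 * u * g + 3 * g ^ 2 + 3 * z0 ^ 2 = n := by
    have h3' : 3 * (u ^ 2 - 3 * u * g + 3 * g ^ 2 + 3 * z0 ^ 2) = 3 * n := by
      linear_combination heq
    exact mul_left_cancel₀ (by norm_num : (3:ℤ) ≠ 0) h3'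
  rcases Int.even_or_odd u with ⟨p, hp⟩ | ⟨p, hp⟩
  · -- u even : x = p, y = p - g
    exact ⟨p, p - g, z0, by subst hp; linear_combination key⟩
  · rcases Int.even_or_odd g with ⟨q, hq'⟩ | ⟨q, hq'⟩
    · -- u odd, g even : x = u - 3q, y = q
      exact ⟨u - 3 * q, q, z0, by subst hq'; linear_combination key⟩
    · -- u odd, g odd : x = 3q - p + 1, y = q - p
      exact ⟨3 * q - p + 1, q - p, z0, by subst hp hq'; linear_combination key⟩
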